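/- Let P ⊆ ℤ₊ be an infinite arithmetic progression and let M : P → ℂ be a function of geometric type, i.e. M(ν) = (Σ_{i=1}^k a_i α_i^ν)/(Σ_{j=1}^l b_j β_j^ν) for complex numbers a_i, α_i, b_j, β_j with nonzero denominator for every ν ∈ P. If M is integer-valued and M(ν) has a finite limit L ∈ ℂ as ν → ∞ along P, then M is the constant function with value L (in particular L is an integer). -/

import Mathlib

/-- An exponential sum whose zero-base terms have zero coefficients and which
vanishes on a tail of `ℕ` vanishes everywhere. -/
lemma expsum_eq_zero_of_tail {ι : Type*} [Fintype ι] (γ c : ι → ℂ)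
    (hz : ∀ t, γ t = 0 → c t = 0) (N : ℕ)
    (h : ∀ ν, N ≤ ν → ∑ t, c t * γ t ^ ν = 0) (ν : ℕ) :
    ∑ t, c t * γ t ^ ν = 0 := by
  classical
  set T := Finset.univ.image γ with hT
  set C : ℂ → ℂ := fun z => ∑ t ∈ Finset.univ.filter (fun t => γ t = z), c t with hCdef
  have key : ∀ μ : ℕ, ∑ t, c t * γ t ^ μ = ∑ z ∈ T, C z * z ^ μ := by
    intro μ
    rw [← Finset.sum_fiberwise_of_maps_to
      (fun t _ => Finset.mem_image_of_mem γ (Finset.mem_univ t)) (fun t => c t * γ t ^ μ)]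
    refine Finset.sum_congr rfl fun z _ => ?_
    rw [hCdef, Finset.sum_mul]
    refine Finset.sum_congr rfl fun t ht => ?_
    rw [(Finset.mem_filter.mp ht).2]
  have hC0 : C 0 = 0 :=
    Finset.sum_eq_zero fun t ht => hz t (Finset.mem_filter.mp ht).2
  set n := T.card with hn
  set e : Fin n ≃ T := T.equivFin.symm with he
  set f : Fin n → ℂ := fun i => (e i : ℂ) with hfdef
  have hf : Function.Injective f := fun i j hij => e.injective (Subtype.ext hij)
  have hsum_e : ∀ g : ℂ → ℂ, ∑ i, g (f i) = ∑ z ∈ T, g z := by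
    intro g
    rw [hfdef]
    rw [show (∑ i, g ((e i : ℂ))) = ∑ z : T, g z from Equiv.sum_comp e (fun z => g (z : ℂ))]
    exact Finset.sum_coe_sort T g
  have hv : (fun i => C (f i) * f i ^ N) = 0 := by
    apply Matrix.eq_zero_of_forall_pow_sum_mul_pow_eq_zero hf
    intro i
    have : ∑ j, C (f j) * f j ^ N * f j ^ (i : ℕ)
        = ∑ z ∈ T, C z * z ^ (N + (i : ℕ)) := by
      rw [← hsum_e (fun z => C z * z ^ (N + (i : ℕ)))]
      refine Finset.sum_congr rfl fun j _ => ?_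
      rw [pow_add, mul_assoc]
    rw [this, ← key (N + i), h _ (Nat.le_add_right _ _)]
  have hCz : ∀ z ∈ T, C z = 0 := by
    intro z hzT
    rcases eq_or_ne z 0 with rfl | hz0
    · exact hC0
    · have := congrFun hv (e.symm ⟨z, hzT⟩)
      simp only [Pi.zero_apply, hfdef, Equiv.apply_symm_apply] at this
      rcases mul_eq_zero.mp this with h' | h'
      · exact h'
      · exact absurd (pow_eq_zero_iff'.mp h').1 hz0
  rw [key ν]
  exact Finset.sum_eq_zero fun z hzT => by rw [hCz z hzT, zero_mul]

/-- A function of geometric type on an arithmetic progression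
`{s + ν·d : ν ∈ ℕ}` (with `s, d ≥ 1`) which is integer-valued and converges to a
finite limit `L` along the progression is the constant function `L`. -/
theorem geometric_type_integer_valued_with_limit_is_constant
    (s d : ℕ) (hs : 1 ≤ s) (hd : 1 ≤ d) (M : ℕ → ℂ)
    (k l : ℕ) (a α : Fin k → ℂ) (b β : Fin l → ℂ)
    (hden : ∀ ν : ℕ, (∑ j, b j * β j ^ (s + ν * d)) ≠ 0)
    (hM : ∀ ν : ℕ, M (s + ν * d) =
      (∑ i, a i * α i ^ (s + ν * d)) / (∑ j, b j * β j ^ (s + ν * d)))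
    (hint : ∀ ν : ℕ, ∃ m : ℤ, M (s + ν * d) = (m : ℂ))
    (L : ℂ)
    (hlim : Filter.Tendsto (fun ν : ℕ => M (s + ν * d)) Filter.atTop (nhds L)) :
    ∀ ν : ℕ, M (s + ν * d) = L := by
  classical
  choose m hm using hint
  -- Step 1: eventually M (s + ν d) = L
  obtain ⟨N, hN⟩ := (Metric.tendsto_atTop.mp hlim) (1/2) (by norm_num)
  have hmconst : ∀ ν, N ≤ ν → m ν = m N := by
    intro ν hν
    have h1 := hN ν hν
    have h2 := hN N le_rfl
    rw [hm] at h1 h2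
    have : dist ((m ν : ℂ)) ((m N : ℂ)) < 1 := by
      calc dist ((m ν : ℂ)) ((m N : ℂ)) ≤ dist ((m ν : ℂ)) L + dist L ((m N : ℂ)) :=
            dist_triangle _ _ _
        _ < 1/2 + 1/2 := by rw [dist_comm L]; exact add_lt_add h1 h2
        _ = 1 := by norm_num
    have habs : |(m ν : ℝ) - (m N : ℝ)| < 1 := by
      have := this
      rw [Complex.dist_eq] at this
      calc |(m ν : ℝ) - (m N : ℝ)| = ‖(m ν : ℂ) - (m N : ℂ)‖ := by
            rw [show ((m ν : ℂ)) - ((m N : ℂ)) = (((m ν - m N : ℤ) : ℝ) : ℂ) by push_cast; ring]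
            rw [Complex.norm_real, Real.norm_eq_abs]
            push_cast
            ring_nf
        _ < 1 := this
    have h5 : |m ν - m N| < 1 := by
      exact_mod_cast (by push_cast at habs ⊢; exact habs : |((m ν - m N : ℤ) : ℝ)| < 1)
    rcases abs_lt.mp h5 with ⟨h6, h7⟩
    omega
  have hL : L = (m N : ℂ) := by
    have : Filter.Tendsto (fun ν : ℕ => M (s + ν * d)) Filter.atTop (nhds ((m N : ℂ))) := by
      apply Filter.Tendsto.congr' _ tendsto_const_nhds
      filter_upwards [Filter.eventually_atTop.mpr ⟨N, fun ν hν => hmconst ν hν⟩] with ν hν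
      rw [hm, hν]
    exact tendsto_nhds_unique hlim this
  have htail : ∀ ν, N ≤ ν → M (s + ν * d) = L := by
    intro ν hν
    rw [hm, hmconst ν hν, hL]
  -- Step 2: exponential sum vanishing on the tail
  set c : Fin k ⊕ Fin l → ℂ :=
    Sum.elim (fun i => a i * α i ^ s) (fun j => -L * (b j * β j ^ s)) with hc
  set γ : Fin k ⊕ Fin l → ℂ := Sum.elim (fun i => α i ^ d) (fun j => β j ^ d) with hγ
  have hzc : ∀ t, γ t = 0 → c t = 0 := by
    rintro (i | j) ht
    · have : α i = 0 := pow_eq_zero_iff (by omega) |>.mp ht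
      simp [hc, this, zero_pow (by omega : s ≠ 0)]
    · have : β j = 0 := pow_eq_zero_iff (by omega) |>.mp ht
      simp [hc, this, zero_pow (by omega : s ≠ 0)]
  have hsum : ∀ ν : ℕ, ∑ t, c t * γ t ^ ν
      = (∑ i, a i * α i ^ (s + ν * d)) - L * ∑ j, b j * β j ^ (s + ν * d) := by
    intro ν
    rw [Fintype.sum_sum_type]
    have h1 : ∀ i : Fin k, c (Sum.inl i) * γ (Sum.inl i) ^ ν = a i * α i ^ (s + ν * d) := by
      intro i
      simp only [hc, hγ, Sum.elim_inl]
      rw [pow_add, mul_comm ν d, pow_mul]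
      ring
    have h2 : ∀ j : Fin l, c (Sum.inr j) * γ (Sum.inr j) ^ ν
        = -L * (b j * β j ^ (s + ν * d)) := by
      intro j
      simp only [hc, hγ, Sum.elim_inr]
      rw [pow_add, mul_comm ν d, pow_mul]
      ring
    rw [Finset.sum_congr rfl fun i _ => h1 i, Finset.sum_congr rfl fun j _ => h2 j]
    rw [← Finset.mul_sum]
    ring
  have htail0 : ∀ ν, N ≤ ν → ∑ t, c t * γ t ^ ν = 0 := by
    intro ν hν
    rw [hsum]
    have := htail ν hν
    rw [hM] at this
    rw [div_eq_iff (hden ν)] at this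
    rw [this]
    ring
  have hall := expsum_eq_zero_of_tail γ c hzc N htail0
  intro ν
  have := hall ν
  rw [hsum] at this
  have hnum : (∑ i, a i * α i ^ (s + ν * d)) = L * ∑ j, b j * β j ^ (s + ν * d) := by
    linear_combination this
  rw [hM, hnum, mul_div_assoc, div_self (hden ν), mul_one]
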